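/- Let σ and ρ be density matrices on ℂ² ⊗ ℂ² with σ pure. Suppose Tr(ρ P) = Tr(σ P) for every P in a set S of tensor products of Pauli matrices, and suppose Tr(σ P) = 0 for all two-qubit Pauli products P not in S ∪ {I⊗I}. If additionally Tr(ρ P) = Tr(σ P) holds for all Pauli products P in S, then Tr(ρ²) ≤ 1 forces Tr(ρ P) = 0 for all P ∉ S ∪ {I⊗I}, and hence ρ = σ. -/

import Mathlib

open Matrix
open scoped Kronecker ComplexOrder

/-- The four Pauli matrices `I, X, Y, Z`. -/
noncomputable def pauli : Fin 4 → Matrix (Fin 2) (Fin 2) ℂ :=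
  ![1, !![0, 1; 1, 0], !![0, -Complex.I; Complex.I, 0], !![1, 0; 0, -1]]

/-- Two-qubit Pauli products `M ⊗ N` with `M, N ∈ {I, X, Y, Z}`. -/
noncomputable def pauliProd (p : Fin 4 × Fin 4) :
    Matrix (Fin 2 × Fin 2) (Fin 2 × Fin 2) ℂ :=
  pauli p.1 ⊗ₖ pauli p.2

lemma pauliProd_zero : pauliProd ((0, 0) : Fin 4 × Fin 4) = 1 := by
  show pauli 0 ⊗ₖ pauli 0 = 1
  have : pauli 0 = 1 := rfl
  rw [this, Matrix.one_kronecker_one]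

/-- Bilinear Parseval-type identity for the Pauli basis. -/
lemma pauli_parseval (A B : Matrix (Fin 2 × Fin 2) (Fin 2 × Fin 2) ℂ) :
    (A * B).trace =
      (1/4 : ℂ) * ∑ p : Fin 4 × Fin 4, (A * pauliProd p).trace * (B * pauliProd p).trace := by
  simp only [trace, diag, mul_apply, pauliProd, pauli, kroneckerMap_apply,
    Fintype.sum_prod_type, Fin.sum_univ_succ, Fin.sum_univ_zero]
  norm_num [Fin.isValue, Matrix.cons_val_zero, Matrix.cons_val_one, Matrix.head_cons,
    Matrix.one_apply, Matrix.cons_val_two, Matrix.cons_val_three, Matrix.tail_cons]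
  ring_nf
  simp only [Complex.I_sq]
  ring

lemma trace_sq_eq {n : Type*} [Fintype n] [DecidableEq n] (A : Matrix n n ℂ)
    (hA : A.IsHermitian) :
    (A * A).trace = ((∑ i, hA.eigenvalues i ^ 2 : ℝ) : ℂ) := by
  set U := (hA.eigenvectorUnitary : Matrix n n ℂ) with hUdef
  set D := Matrix.diagonal (RCLike.ofReal ∘ hA.eigenvalues : n → ℂ) with hD
  have hU : star U * U = 1 := Matrix.mem_unitaryGroup_iff'.mp hA.eigenvectorUnitary.2
  have h1 : A = U * D * star U := hA.spectral_theorem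
  have h2 : A * A = U * (D * D) * star U := by
    rw [h1]
    calc U * D * star U * (U * D * star U) = U * D * (star U * U) * D * star U := by
          noncomm_ring
      _ = U * (D * D) * star U := by rw [hU]; noncomm_ring
  rw [h2, Matrix.trace_mul_cycle, ← Matrix.mul_assoc, hU, Matrix.one_mul, hD,
    Matrix.diagonal_mul_diagonal, Matrix.trace_diagonal]
  push_cast
  simp [pow_two]

lemma trace_eq_sum_eig {n : Type*} [Fintype n] [DecidableEq n] (A : Matrix n n ℂ)
    (hA : A.IsHermitian) :
    A.trace = ((∑ i, hA.eigenvalues i : ℝ) : ℂ) := by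
  set U := (hA.eigenvectorUnitary : Matrix n n ℂ) with hUdef
  have hU : star U * U = 1 := Matrix.mem_unitaryGroup_iff'.mp hA.eigenvectorUnitary.2
  nth_rewrite 1 [show A = U * Matrix.diagonal (RCLike.ofReal ∘ hA.eigenvalues : n → ℂ) * star U
    from hA.spectral_theorem]
  rw [Matrix.trace_mul_cycle, hU, Matrix.one_mul, Matrix.trace_diagonal]
  push_cast
  rfl

lemma trace_self_mul_self {n : Type*} [Fintype n] (D : Matrix n n ℂ)
    (hD : D.IsHermitian) :
    (D * D).trace = ((∑ i, ∑ j, Complex.normSq (D i j) : ℝ) : ℂ) := by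
  have key : ∀ i j, D j i = (starRingEnd ℂ) (D i j) := by
    intro i j
    have := congrFun (congrFun hD j) i
    simpa [Matrix.conjTranspose_apply] using this.symm
  simp only [trace, diag, mul_apply]
  push_cast
  refine Finset.sum_congr rfl fun i _ => Finset.sum_congr rfl fun j _ => ?_
  rw [key i j, Complex.mul_conj]

/-- If `σ` is a pure two-qubit state, `ρ` agrees with `σ` on all Pauli products
in `S`, and `σ` has vanishing Pauli coefficients outside `S ∪ {I⊗I}`, then `ρ`
also has vanishing Pauli coefficients outside `S ∪ {I⊗I}`, and hence `ρ = σ`. -/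
theorem stmt10 (S : Set (Fin 4 × Fin 4))
    (ρ σ : Matrix (Fin 2 × Fin 2) (Fin 2 × Fin 2) ℂ)
    (hρ : ρ.PosSemidef) (hρtr : ρ.trace = 1)
    (hσ : σ.PosSemidef) (hσtr : σ.trace = 1)
    (hpure : σ * σ = σ)
    (hagree : ∀ p ∈ S, (ρ * pauliProd p).trace = (σ * pauliProd p).trace)
    (hvanish : ∀ p ∉ insert ((0, 0) : Fin 4 × Fin 4) S,
      (σ * pauliProd p).trace = 0) :
    (∀ p ∉ insert ((0, 0) : Fin 4 × Fin 4) S, (ρ * pauliProd p).trace = 0) ∧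
    ρ = σ := by
  classical
  -- trace(ρσ) = trace(σσ) = 1
  have hρσ : (ρ * σ).trace = (σ * σ).trace := by
    rw [pauli_parseval ρ σ, pauli_parseval σ σ]
    congr 1
    refine Finset.sum_congr rfl fun p _ => ?_
    by_cases hp : p ∈ insert ((0, 0) : Fin 4 × Fin 4) S
    · rcases Set.mem_insert_iff.mp hp with h0 | hS
      · subst h0
        rw [pauliProd_zero, Matrix.mul_one, Matrix.mul_one, hρtr, hσtr]
      · rw [hagree p hS]
    · rw [hvanish p hp, mul_zero, mul_zero]
  have hσσ : (σ * σ).trace = 1 := by rw [hpure, hσtr]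
  have hρσ1 : (ρ * σ).trace = 1 := hρσ.trans hσσ
  have hσρ1 : (σ * ρ).trace = 1 := by rw [Matrix.trace_mul_comm]; exact hρσ1
  -- trace(ρ²) ≤ 1
  have hherm : ρ.IsHermitian := hρ.1
  have hsum1 : ∑ i, hherm.eigenvalues i = 1 := by
    have := (trace_eq_sum_eig ρ hherm).symm.trans hρtr
    exact_mod_cast this
  have hsq_le : ∑ i, hherm.eigenvalues i ^ 2 ≤ 1 := by
    calc ∑ i, hherm.eigenvalues i ^ 2 ≤ (∑ i, hherm.eigenvalues i) ^ 2 :=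
          Finset.sum_sq_le_sq_sum_of_nonneg fun i _ => hρ.eigenvalues_nonneg i
      _ = 1 := by rw [hsum1]; norm_num
  have hρ2 : (ρ * ρ).trace = ((∑ i, hherm.eigenvalues i ^ 2 : ℝ) : ℂ) := trace_sq_eq ρ hherm
  -- D = ρ - σ
  have hDherm : (ρ - σ).IsHermitian := hherm.sub hσ.1
  have hDtr : ((ρ - σ) * (ρ - σ)).trace
      = (ρ * ρ).trace - (ρ * σ).trace - (σ * ρ).trace + (σ * σ).trace := by
    simp only [Matrix.sub_mul, Matrix.mul_sub, Matrix.trace_sub]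
    ring
  have hfrob := trace_self_mul_self (ρ - σ) hDherm
  have hkey : ((∑ i, ∑ j, Complex.normSq ((ρ - σ) i j) : ℝ) : ℂ)
      = ((∑ i, hherm.eigenvalues i ^ 2 - 1 : ℝ) : ℂ) := by
    rw [← hfrob, hDtr, hρ2, hρσ1, hσρ1, hσσ]
    push_cast
    ring
  have hreal : (∑ i, ∑ j, Complex.normSq ((ρ - σ) i j) : ℝ)
      = ∑ i, hherm.eigenvalues i ^ 2 - 1 := by exact_mod_cast hkey
  have hnonneg : 0 ≤ ∑ i, ∑ j, Complex.normSq ((ρ - σ) i j) :=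
    Finset.sum_nonneg fun i _ => Finset.sum_nonneg fun j _ => Complex.normSq_nonneg _
  have hzero : ∑ i, ∑ j, Complex.normSq ((ρ - σ) i j) = 0 := by
    have : ∑ i, ∑ j, Complex.normSq ((ρ - σ) i j) ≤ 0 := by
      rw [hreal]; linarith
    linarith
  have hD0 : ρ - σ = 0 := by
    ext i j
    have hi := Finset.sum_eq_zero_iff_of_nonneg
      (fun i _ => Finset.sum_nonneg fun j _ => Complex.normSq_nonneg ((ρ - σ) i j)) |>.mp hzero
    have hj := Finset.sum_eq_zero_iff_of_nonneg
      (fun j _ => Complex.normSq_nonneg ((ρ - σ) i j)) |>.mp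
      (hi i (Finset.mem_univ i)) j (Finset.mem_univ j)
    simpa using Complex.normSq_eq_zero.mp hj
  have heq : ρ = σ := sub_eq_zero.mp hD0
  exact ⟨fun p hp => by rw [heq]; exact hvanish p hp, heq⟩
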